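/- Let F be a field and let Q be a finite quiver, and let (A, b) be a path algebra of Q over F. Then A is PI if and only if every vertex of Q lies on at most one cycle, i.e., any two cycles of Q that share a common vertex have the same set of arrows. -/

import Mathlib

structure Quiv where
  V : Type
  A : Type
  [fintV : Fintype V]
  [fintA : Fintype A]
  s : A → V
  t : A → V

attribute [instance] Quiv.fintV Quiv.fintA

inductive Quiv.IsPathFrom (Q : Quiv) : Q.V → List Q.A → Q.V → Prop
  | nil (v : Q.V) : Q.IsPathFrom v [] v
  | cons {l : List Q.A} {v : Q.V} (a : Q.A) :
      Q.IsPathFrom (Q.t a) l v → Q.IsPathFrom (Q.s a) (a :: l) v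

/-- A path in a quiver: a start vertex, a compatible list of arrows, and an end vertex. -/
structure Quiv.QPath (Q : Quiv) where
  src : Q.V
  arrows : List Q.A
  tgt : Q.V
  isPath : Q.IsPathFrom src arrows tgt

theorem Quiv.IsPathFrom.append {Q : Quiv} {u v w : Q.V} {l l' : List Q.A}
    (h1 : Q.IsPathFrom u l v) : Q.IsPathFrom v l' w → Q.IsPathFrom u (l ++ l') w := by
  induction h1 with
  | nil _ => exact id
  | cons a _ ih => exact fun h2 => .cons a (ih h2)

/-- The lazy path at a vertex. -/
def Quiv.QPath.lazy (Q : Quiv) (v : Q.V) : Q.QPath := ⟨v, [], v, .nil v⟩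

/-- Concatenation of composable paths. -/
def Quiv.QPath.comp {Q : Quiv} (p q : Q.QPath) (h : p.tgt = q.src) : Q.QPath :=
  ⟨p.src, p.arrows ++ q.arrows, q.tgt, p.isPath.append (h.symm ▸ q.isPath)⟩

/-- The length-one path given by a single arrow. -/
def Quiv.QPath.ofArrow (Q : Quiv) (a : Q.A) : Q.QPath :=
  ⟨Q.s a, [a], Q.t a, .cons a (.nil _)⟩

/-- A path algebra of the quiver `Q` over `F`: an `F`-algebra `A` together with a basis
`b` indexed by the paths of `Q`, multiplying by concatenation. -/
structure PathAlgebra (F : Type) [Field F] (Q : Quiv) (A : Type) [Ring A] [Algebra F A] where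
  b : Q.QPath → A
  indep : LinearIndependent F b
  spans : Submodule.span F (Set.range b) = ⊤
  mul_comp : ∀ (p q : Q.QPath) (h : p.tgt = q.src), b p * b q = b (p.comp q h)
  mul_zero : ∀ p q : Q.QPath, p.tgt ≠ q.src → b p * b q = 0
  sum_lazy : ∑ v : Q.V, b (Quiv.QPath.lazy Q v) = 1

/-- `f` is a polynomial identity for the `F`-algebra `A`. -/
def IsPolyId (F : Type) [Field F] (A : Type) [Ring A] [Algebra F A]
    (f : FreeAlgebra F ℕ) : Prop :=
  ∀ φ : FreeAlgebra F ℕ →ₐ[F] A, φ f = 0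

/-- `A` is a PI algebra: it has a nonzero polynomial identity. -/
def IsPI (F : Type) [Field F] (A : Type) [Ring A] [Algebra F A] : Prop :=
  ∃ f : FreeAlgebra F ℕ, f ≠ 0 ∧ IsPolyId F A f

/-- A cycle: a nonempty closed path with pairwise distinct source vertices. -/
def Quiv.QPath.IsCycle {Q : Quiv} (c : Q.QPath) : Prop :=
  c.arrows ≠ [] ∧ c.tgt = c.src ∧ (c.arrows.map Q.s).Nodup

/-- The standard identity `St_N` holds in `A`. -/
def SatisfiesStandardIdentity (A : Type) [Ring A] (N : ℕ) : Prop :=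
  ∀ a : Fin N → A,
    ∑ σ : Equiv.Perm (Fin N), (Equiv.Perm.sign σ : ℤ) • (List.ofFn fun i => a (σ i)).prod = 0


namespace PIQ

open Quiv List

variable {Q : Quiv}


open Quiv List

variable {Q : Quiv}

theorem src_of_cons {u w : Q.V} {a : Q.A} {l : List Q.A} (h : Q.IsPathFrom u (a :: l) w) :
    u = Q.s a ∧ Q.IsPathFrom (Q.t a) l w := by
  cases h with | cons _ h2 => exact ⟨rfl, h2⟩

theorem tgt_unique {l : List Q.A} : ∀ {u v v' : Q.V}, Q.IsPathFrom u l v →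
    Q.IsPathFrom u l v' → v = v' := by
  induction l with
  | nil => intro u v v' h h'; cases h; cases h'; rfl
  | cons a r ih =>
    intro u v v' h h'
    exact ih (src_of_cons h).2 (src_of_cons h').2

theorem split_path {l₁ l₂ : List Q.A} : ∀ {u w : Q.V}, Q.IsPathFrom u (l₁ ++ l₂) w →
    ∃ m, Q.IsPathFrom u l₁ m ∧ Q.IsPathFrom m l₂ w := by
  induction l₁ with
  | nil => exact fun h => ⟨_, .nil _, h⟩
  | cons a r ih =>
    intro u w h
    cases h with | cons _ h2 =>
      obtain ⟨m, hm1, hm2⟩ := ih h2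
      exact ⟨m, .cons a hm1, hm2⟩

/-- If `x` occurs in a walk from `u`, the walk reaches `Q.s x` via the prefix. -/
theorem reach_of_mem {x : Q.A} {l : List Q.A} :
    ∀ {u w : Q.V}, Q.IsPathFrom u l w → x ∈ l →
    ∃ pre suf, l = pre ++ x :: suf ∧ Q.IsPathFrom u pre (Q.s x) := by
  induction l with
  | nil => intro u w _ hx; cases hx
  | cons a r ih =>
    intro u w h hx
    obtain ⟨rfl, h2⟩ := src_of_cons h
    rcases List.mem_cons.mp hx with rfl | hx
    · exact ⟨[], r, rfl, .nil _⟩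
    · obtain ⟨pre, suf, hdecomp, hpre⟩ := ih h2 hx
      exact ⟨a :: pre, suf, by rw [hdecomp]; rfl, .cons a hpre⟩

/-- duplicate decomposition -/
theorem exists_dup_decomp {α β : Type*} (f : α → β) {l : List α} (h : ¬ (l.map f).Nodup) :
    ∃ (p : List α) (x : α) (m : List α) (y : α) (r : List α),
      l = p ++ x :: m ++ y :: r ∧ f x = f y := by
  induction l with
  | nil => simp at h
  | cons c tl ih =>
    by_cases hc : f c ∈ tl.map f
    · obtain ⟨y, hy, hfy⟩ := List.mem_map.mp hc
      obtain ⟨m, r, rfl⟩ := List.append_of_mem hy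
      exact ⟨[], c, m, y, r, rfl, hfy.symm⟩
    · have : ¬ (tl.map f).Nodup := by
        intro hn
        exact h (by simpa using List.Nodup.cons hc hn)
      obtain ⟨p, x, m, y, r, rfl, hfxy⟩ := ih this
      exact ⟨c :: p, x, m, y, r, rfl, hfxy⟩

/-- Extract from a closed walk starting with `a` a closed walk starting with `a`
with pairwise distinct sources (a cycle). -/
theorem extract_cycle : ∀ (n : ℕ) (l : List Q.A) (_ : l.length ≤ n) (a : Q.A),
    Q.IsPathFrom (Q.s a) (a :: l) (Q.s a) →
    ∃ m, Q.IsPathFrom (Q.s a) (a :: m) (Q.s a) ∧ ((a :: m).map Q.s).Nodup := by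
  intro n
  induction n with
  | zero =>
    intro l hl a h
    have : l = [] := List.length_eq_zero_iff.mp (Nat.le_zero.mp hl)
    subst this
    exact ⟨[], h, by simp⟩
  | succ n ih =>
    intro l hl a h
    by_cases hnd : ((a :: l).map Q.s).Nodup
    · exact ⟨l, h, hnd⟩
    · obtain ⟨p, x, m, y, r, hdec, hfxy⟩ := exists_dup_decomp Q.s hnd
      -- a :: l = p ++ x :: m ++ y :: r
      cases p with
      | nil =>
        -- x = a, cut to walk a :: m' where the y-position closes at s a
        have hx : x = a ∧ l = m ++ y :: r := by
          have := hdec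
          simp at this
          exact ⟨this.1.symm, this.2⟩
        obtain ⟨rfl, rfl⟩ := hx
        have h2 := (src_of_cons h).2
        obtain ⟨mid, hm1, hm2⟩ := split_path (l₁ := m) (l₂ := y :: r) h2
        obtain ⟨rfl, _⟩ := src_of_cons hm2
        -- walk x :: m from s x to s y = s x
        have hw : Q.IsPathFrom (Q.s x) (x :: m) (Q.s x) := by
          have : Q.IsPathFrom (Q.t x) m (Q.s x) := hfxy ▸ hm1
          exact .cons x this
        exact ih m (by simp [List.length_append] at hl ⊢; omega) x hw
      | cons a' p' =>
        have ha' : a' = a ∧ l = p' ++ x :: m ++ y :: r := by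
          have := hdec
          simp at this
          exact ⟨this.1.symm, by simpa using this.2⟩
        obtain ⟨rfl, rfl⟩ := ha'
        have h2 := (src_of_cons h).2
        -- cut the segment x :: m : new tail p' ++ y :: r
        have h2' : Q.IsPathFrom (Q.t a') (p' ++ ((x :: m) ++ (y :: r))) (Q.s a') := by
          simpa [List.append_assoc] using h2
        obtain ⟨m1, hm1, hm2⟩ := split_path (l₁ := p') h2'
        obtain ⟨m2, hm21, hm22⟩ := split_path (l₁ := x :: m) (l₂ := y :: r) hm2
        obtain ⟨rfl, _⟩ := src_of_cons hm21
        obtain ⟨hy, hyr⟩ := src_of_cons hm22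
        have hw : Q.IsPathFrom (Q.s a') (a' :: (p' ++ y :: r)) (Q.s a') := by
          refine .cons a' (hm1.append ?_)
          rw [hfxy, ← hy]
          exact hm22
        refine ih (p' ++ y :: r) ?_ a' hw
        simp [List.length_append] at hl ⊢
        omega
  
/-- The "at most one cycle per vertex" hypothesis. -/
def Hyp (Q : Quiv) : Prop :=
  ∀ c₁ c₂ : Q.QPath, c₁.IsCycle → c₂.IsCycle →
    (∃ v : Q.V, v ∈ c₁.arrows.map Q.s ∧ v ∈ c₂.arrows.map Q.s) →
    (∀ a : Q.A, a ∈ c₁.arrows ↔ a ∈ c₂.arrows)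

/-- Under the hypothesis, two closed walks at the same vertex have the same first arrow. -/
theorem first_arrow_unique (H : Hyp Q) {a a' : Q.A} {l l' : List Q.A}
    (hs : Q.s a = Q.s a')
    (w : Q.IsPathFrom (Q.s a) (a :: l) (Q.s a))
    (w' : Q.IsPathFrom (Q.s a') (a' :: l') (Q.s a')) : a = a' := by
  obtain ⟨m, hm, hmn⟩ := extract_cycle l.length l le_rfl a w
  obtain ⟨m', hm', hmn'⟩ := extract_cycle l'.length l' le_rfl a' w'
  by_contra hne
  set c₁ : Q.QPath := ⟨Q.s a, a :: m, Q.s a, hm⟩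
  set c₂ : Q.QPath := ⟨Q.s a', a' :: m', Q.s a', hm'⟩
  have hc₁ : c₁.IsCycle := ⟨by simp [c₁], rfl, hmn⟩
  have hc₂ : c₂.IsCycle := ⟨by simp [c₂], rfl, hmn'⟩
  have hshare : ∃ v : Q.V, v ∈ c₁.arrows.map Q.s ∧ v ∈ c₂.arrows.map Q.s :=
    ⟨Q.s a, by simp [c₁], by simp [c₂, ← hs]⟩
  have hmem := (H c₁ c₂ hc₁ hc₂ hshare a).mp (by simp [c₁])
  have : a ∈ m' := by
    rcases List.mem_cons.mp hmem with h1 | h1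
    · exact absurd h1 hne
    · exact h1
  have : Q.s a' ∈ m'.map Q.s := List.mem_map.mpr ⟨a, this, hs⟩
  have hnd := hmn'
  simp only [List.map_cons, List.nodup_cons] at hnd
  exact hnd.1 this

/-- Under the hypothesis, a walk from a fixed vertex is determined by its multiset of arrows. -/
theorem walk_determined (H : Hyp Q) : ∀ (l₁ l₂ : List Q.A) {u v₁ v₂ : Q.V},
    Q.IsPathFrom u l₁ v₁ → Q.IsPathFrom u l₂ v₂ →
    (l₁ : Multiset Q.A) = (l₂ : Multiset Q.A) → l₁ = l₂ := by
  intro l₁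
  induction l₁ with
  | nil =>
    intro l₂ u v₁ v₂ _ _ hmul
    have h0 : (l₂ : Multiset Q.A) = 0 := by rw [← hmul]; simp
    exact ((Multiset.coe_eq_zero _).mp h0).symm
  | cons a r₁ ih =>
    intro l₂ u v₁ v₂ h₁ h₂ hmul
    cases l₂ with
    | nil => simp at hmul
    | cons a' r₂ =>
      obtain ⟨rfl, h₁t⟩ := src_of_cons h₁
      have hs' : Q.s a = Q.s a' := (src_of_cons h₂).1
      have h₂t := (src_of_cons h₂).2
      by_cases hne : a = a'
      · subst hne
        have : (r₁ : Multiset Q.A) = (r₂ : Multiset Q.A) := by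
          have := hmul
          rw [← Multiset.cons_coe, ← Multiset.cons_coe] at this  -- coe (a::r) = a ::ₘ coe r
          exact (Multiset.cons_inj_right a).mp (by simpa using this)
        have := ih r₂ h₁t h₂t this
        rw [this]
      · exfalso
        have ha' : a' ∈ r₁ := by
          have : a' ∈ (a :: r₁ : List Q.A) := by
            have : a' ∈ ((a :: r₁ : List Q.A) : Multiset Q.A) := by
              rw [hmul]; simp
            simpa using this
          rcases List.mem_cons.mp this with h1 | h1
          · exact absurd h1.symm hne
          · exact h1
        obtain ⟨pre, suf, hdec, hpre⟩ := reach_of_mem h₁t ha'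
        -- closed walk a :: pre at s a (= s a')
        have w1 : Q.IsPathFrom (Q.s a) (a :: pre) (Q.s a) := by
          have : Q.IsPathFrom (Q.t a) pre (Q.s a) := by rw [hs']; exact hpre
          exact .cons a this
        have ha : a ∈ r₂ := by
          have : a ∈ (a' :: r₂ : List Q.A) := by
            have : a ∈ ((a' :: r₂ : List Q.A) : Multiset Q.A) := by
              rw [← hmul]; simp
            simpa using this
          rcases List.mem_cons.mp this with h1 | h1
          · exact absurd h1 hne
          · exact h1
        obtain ⟨pre', suf', hdec', hpre'⟩ := reach_of_mem h₂t ha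
        have w2 : Q.IsPathFrom (Q.s a') (a' :: pre') (Q.s a') := by
          have : Q.IsPathFrom (Q.t a') pre' (Q.s a') := by rw [← hs']; exact hpre'
          exact .cons a' this
        exact hne (first_arrow_unique H hs' w1 w2)



variable {α : Type*}

/-- `b` repeated `k` times. -/
def bpow (b : List α) (k : ℕ) : List α := (List.replicate k b).flatten

theorem bpow_length (b : List α) (k : ℕ) : (bpow b k).length = k * b.length := by
  simp [bpow, List.length_flatten]

theorem mem_bpow {x : α} {b : List α} {k : ℕ} (h : x ∈ bpow b k) : x ∈ b := by
  obtain ⟨l, hl, hx⟩ := List.mem_flatten.mp h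
  rwa [List.eq_of_mem_replicate hl] at hx

theorem bpow_add (b : List α) (m n : ℕ) : bpow b (m + n) = bpow b m ++ bpow b n := by
  unfold bpow
  rw [List.replicate_add, List.flatten_append]

/-- The encoding of a word of naturals. -/
def wcode (a b : List α) : List ℕ → List α
  | [] => []
  | i :: u => a ++ (bpow b (i + 1) ++ wcode a b u)

theorem wcode_ne_nil {a b : List α} (ha : a ≠ []) (i : ℕ) (u : List ℕ) :
    wcode a b (i :: u) ≠ [] := by
  simp [wcode, ha]

/-- key decoding step -/
theorem wcode_no_shift [DecidableEq α] {a b : List α} (ha : a ≠ []) (hb : b ≠ [])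
    {x : α} (hxa : x ∈ a) (hxb : x ∉ b)
    {k : ℕ} {v v' : List ℕ} (h : wcode a b v = bpow b k ++ wcode a b v') : k = 0 := by
  by_contra hk
  have hbx : x ∉ bpow b k := fun hx => hxb (mem_bpow hx)
  cases v with
  | nil =>
    -- [] = bpow b k ++ ...
    have : (bpow b k ++ wcode a b v').length = 0 := by rw [← h]; simp [wcode]
    simp [bpow_length] at this
    rcases this.1 with h1 | h1
    · exact hk h1
    · exact hb h1
  | cons i w =>
    have hxl : x ∈ wcode a b (i :: w) := by simp [wcode]; tauto
    cases v' with
    | nil =>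
      -- a ++ ... = bpow b k : x in lhs not rhs
      rw [h] at hxl
      simp [wcode] at hxl
      exact hbx hxl
    | cons i' w' =>
      -- compare indexOf x
      have lhs : List.idxOf x (wcode a b (i :: w)) = List.idxOf x a := by
        simp only [wcode]
        exact List.idxOf_append_of_mem hxa
      have rhs : List.idxOf x (bpow b k ++ wcode a b (i' :: w'))
          = (bpow b k).length + List.idxOf x a := by
        rw [List.idxOf_append_of_notMem hbx]
        congr 1
        simp only [wcode]
        exact List.idxOf_append_of_mem hxa
      rw [h, rhs] at lhs
      have : (bpow b k).length = 0 := by omega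
      rw [bpow_length] at this
      rcases Nat.mul_eq_zero.mp this with h1 | h1
      · exact hk h1
      · exact hb (List.length_eq_zero_iff.mp h1)

theorem wcode_injective [DecidableEq α] {a b : List α} (ha : a ≠ []) (hb : b ≠ [])
    {x : α} (hxa : x ∈ a) (hxb : x ∉ b) : Function.Injective (wcode a b) := by
  intro u
  induction u with
  | nil =>
    intro u' h
    cases u' with
    | nil => rfl
    | cons j w' => exact absurd h.symm (by simpa [wcode] using wcode_ne_nil ha j w')
  | cons i w ih =>
    intro u' h
    cases u' with
    | nil => exact absurd h (wcode_ne_nil ha i w)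
    | cons j w' =>
      simp only [wcode] at h
      have h2 : bpow b (i + 1) ++ wcode a b w = bpow b (j + 1) ++ wcode a b w' :=
        List.append_cancel_left h
      have hij : i = j := by
        rcases Nat.le_total i j with hle | hle
        · have : wcode a b w = bpow b (j - i) ++ wcode a b w' := by
            have hsplit : bpow b (j + 1) = bpow b (i + 1) ++ bpow b (j - i) := by
              rw [← bpow_add]; congr 1; omega
            rw [hsplit, List.append_assoc] at h2
            exact List.append_cancel_left h2
          have := wcode_no_shift ha hb hxa hxb this
          omega
        · have : wcode a b w' = bpow b (i - j) ++ wcode a b w := by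
            have hsplit : bpow b (i + 1) = bpow b (j + 1) ++ bpow b (i - j) := by
              rw [← bpow_add]; congr 1; omega
            rw [hsplit, List.append_assoc] at h2
            exact (List.append_cancel_left h2).symm
          have := wcode_no_shift ha hb hxa hxb this
          omega
      subst hij
      have h3 : wcode a b w = wcode a b w' := List.append_cancel_left h2
      rw [ih h3]



noncomputable section

variable (C : Type) [CommRing C] (B : Type) [Ring B] [Algebra C B]

def StdMl (N : ℕ) : MultilinearMap C (fun _ : Fin N => B) B :=
  ∑ σ : Equiv.Perm (Fin N),
    (((Equiv.Perm.sign σ : ℤ) : C)) • (MultilinearMap.mkPiAlgebraFin C N B).domDomCongr σ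

theorem StdMl_apply (N : ℕ) (x : Fin N → B) :
    StdMl C B N x
      = ∑ σ : Equiv.Perm (Fin N), (Equiv.Perm.sign σ : ℤ) • (List.ofFn fun i => x (σ i)).prod := by
  rw [StdMl, MultilinearMap.sum_apply]
  refine Finset.sum_congr rfl fun σ _ => ?_
  rw [MultilinearMap.smul_apply, MultilinearMap.domDomCongr_apply,
    MultilinearMap.mkPiAlgebraFin_apply, Int.cast_smul_eq_zsmul]

theorem StdMl_eq_zero_of_eq (N : ℕ) (x : Fin N → B) (i j : Fin N) (hij : i ≠ j)
    (hx : x i = x j) : StdMl C B N x = 0 := by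
  rw [StdMl_apply]
  have hxs : ∀ k, x (Equiv.swap i j k) = x k := by
    intro k
    rcases eq_or_ne k i with rfl | hki
    · rw [Equiv.swap_apply_left]; exact hx.symm
    rcases eq_or_ne k j with rfl | hkj
    · rw [Equiv.swap_apply_right]; exact hx
    · rw [Equiv.swap_apply_of_ne_of_ne hki hkj]
  refine Finset.sum_involution (fun σ _ => Equiv.swap i j * σ) ?_ ?_ (fun _ _ => Finset.mem_univ _) ?_
  · intro σ _
    have hprod : (fun k => x ((Equiv.swap i j * σ) k)) = fun k => x (σ k) :=
      funext fun k => hxs (σ k)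
    rw [hprod]
    have hsign : (Equiv.Perm.sign (Equiv.swap i j * σ) : ℤ) = -(Equiv.Perm.sign σ : ℤ) := by
      rw [map_mul, Equiv.Perm.sign_swap hij]
      simp
    rw [hsign, neg_smul, add_neg_cancel]
  · intro σ _ _
    show Equiv.swap i j * σ ≠ σ
    intro hcontra
    exact hij (Equiv.swap_eq_one_iff.mp (mul_eq_right.mp hcontra))
  · intro σ _
    show Equiv.swap i j * (Equiv.swap i j * σ) = σ
    rw [← mul_assoc, Equiv.swap_mul_self, one_mul]

theorem StdMl_eq_zero_total {N : ℕ} {κ : Type} [Fintype κ] (hcard : Fintype.card κ < N)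
    (e : κ → B) (coef : B → κ → C) (hrep : ∀ y : B, y = ∑ k : κ, coef y k • e k)
    (x : Fin N → B) : StdMl C B N x = 0 := by
  have hx : x = fun i => ∑ k ∈ (Finset.univ : Finset κ), coef (x i) k • e k := by
    funext i; exact hrep (x i)
  rw [hx, MultilinearMap.map_sum_finset]
  refine Finset.sum_eq_zero fun r _ => ?_
  rw [MultilinearMap.map_smul_univ]
  obtain ⟨i, j, hij, hr⟩ := Fintype.exists_ne_map_eq_of_card_lt r (by simpa using hcard)
  rw [StdMl_eq_zero_of_eq C B N (fun i => e (r i)) i j hij (show e (r i) = e (r j) from congrArg e hr), smul_zero]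

theorem satisfiesStd_of_total {N : ℕ} {κ : Type} [Fintype κ] (hcard : Fintype.card κ < N)
    (e : κ → B) (coef : B → κ → C) (hrep : ∀ y : B, y = ∑ k : κ, coef y k • e k) :
    SatisfiesStandardIdentity B N := by
  intro a
  rw [← StdMl_apply C B N a]
  exact StdMl_eq_zero_total C B hcard e coef hrep a

end

theorem matrix_satisfiesStd (V : Type) [Fintype V] [DecidableEq V]
    (C : Type) [CommRing C] :
    SatisfiesStandardIdentity (Matrix V V C) (Fintype.card V * Fintype.card V + 1) := by
  refine satisfiesStd_of_total C (Matrix V V C)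
    (κ := V × V) (by simp) (fun k => Matrix.single k.1 k.2 1)
    (fun y k => y k.1 k.2) ?_
  intro y
  rw [Fintype.sum_prod_type]
  conv_lhs => rw [Matrix.matrix_eq_sum_single y]
  refine Finset.sum_congr rfl fun u _ => Finset.sum_congr rfl fun w _ => ?_
  rw [Matrix.smul_single, smul_eq_mul, mul_one]

theorem satisfiesStd_of_injective {A B : Type} [Ring A] [Ring B] {N : ℕ} (ι : A →+* B)
    (hinj : Function.Injective ι) (hB : SatisfiesStandardIdentity B N) :
    SatisfiesStandardIdentity A N := by
  intro a
  apply hinj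
  rw [map_sum, map_zero]
  have := hB fun k => ι (a k)
  rw [← this]
  refine Finset.sum_congr rfl fun σ _ => ?_
  rw [map_zsmul]
  congr 1
  rw [map_list_prod ι, List.map_ofFn]
  rfl

/-- A single-letter product lemma in the monoid algebra. -/
theorem single_list_prod (F : Type) [Field F] (l : List ℕ) :
    ((l.map fun i => (MonoidAlgebra.single (FreeMonoid.of i) (1 : F)
        : MonoidAlgebra F (FreeMonoid ℕ)))).prod
      = MonoidAlgebra.single (FreeMonoid.ofList l) 1 := by
  induction l with
  | nil => simp [MonoidAlgebra.one_def]
  | cons i r ih =>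
    rw [List.map_cons, List.prod_cons, ih, MonoidAlgebra.single_mul_single, one_mul]
    rfl

theorem freeAlgebra_equiv_ι (F : Type) [Field F] (i : ℕ) :
    FreeAlgebra.equivMonoidAlgebraFreeMonoid (R := F) (X := ℕ) (FreeAlgebra.ι F i)
      = MonoidAlgebra.single (FreeMonoid.of i) 1 := by
  simp [FreeAlgebra.equivMonoidAlgebraFreeMonoid]

theorem isPI_of_standard (F : Type) [Field F] (A : Type) [Ring A] [Algebra F A]
    (N : ℕ) (h : SatisfiesStandardIdentity A N) : IsPI F A := by
  classical
  set f : FreeAlgebra F ℕ := ∑ σ : Equiv.Perm (Fin N),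
    (Equiv.Perm.sign σ : ℤ) • (List.ofFn fun i => FreeAlgebra.ι F ((σ i : Fin N) : ℕ)).prod with hf
  refine ⟨f, ?_, ?_⟩
  · intro hf0
    set e := FreeAlgebra.equivMonoidAlgebraFreeMonoid (R := F) (X := ℕ) with he
    have h1 : e f = 0 := by rw [hf0, map_zero]
    have h2 : e f = ∑ σ : Equiv.Perm (Fin N),
        (Equiv.Perm.sign σ : ℤ) •
          MonoidAlgebra.single (FreeMonoid.ofList (List.ofFn fun i => ((σ i : Fin N) : ℕ))) (1 : F) := by
      rw [hf, map_sum]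
      refine Finset.sum_congr rfl fun σ _ => ?_
      rw [map_zsmul]
      congr 1
      rw [← single_list_prod F (List.ofFn fun i => ((σ i : Fin N) : ℕ))]
      rw [map_list_prod]
      congr 1
      rw [List.map_ofFn, List.map_ofFn]
      congr 1
      funext k
      exact freeAlgebra_equiv_ι F _
    set w1 : FreeMonoid ℕ := FreeMonoid.ofList (List.ofFn fun i : Fin N => (i : ℕ)) with hw1
    set L : MonoidAlgebra F (FreeMonoid ℕ) →+ F := (Finsupp.applyAddHom (M := F) w1).comp
      (MonoidAlgebra.coeffAddEquiv (R := F) (M := FreeMonoid ℕ)).toAddMonoidHom with hL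
    have h3 := congrArg L h2
    rw [h1, map_zero, map_sum] at h3
    have h4 : ∀ σ : Equiv.Perm (Fin N),
        L
          ((Equiv.Perm.sign σ : ℤ) •
            MonoidAlgebra.single (FreeMonoid.ofList (List.ofFn fun i => ((σ i : Fin N) : ℕ))) (1 : F))
          = if σ = 1 then 1 else 0 := by
      intro σ
      rw [map_zsmul]
      have : L
          (MonoidAlgebra.single (FreeMonoid.ofList (List.ofFn fun i => ((σ i : Fin N) : ℕ))) (1 : F))
          = if σ = 1 then 1 else 0 := by
        show (Finsupp.single _ (1 : F)) w1 = _
        rw [Finsupp.single_apply]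
        congr 1
        simp only [eq_iff_iff]
        constructor
        · intro hEq
          have : (List.ofFn fun i => ((σ i : Fin N) : ℕ)) = List.ofFn fun i : Fin N => (i : ℕ) := by
            have := congrArg FreeMonoid.toList hEq
            simpa [hw1] using this
          have hfn := List.ofFn_inj.mp this
          ext k
          simpa using congrFun hfn k
        · rintro rfl
          simp [hw1]
      rw [this]
      rcases eq_or_ne σ 1 with rfl | hσ
      · simp
      · simp [hσ]
    rw [Finset.sum_congr rfl (fun σ _ => h4 σ)] at h3
    simp at h3
  · intro φ
    rw [hf, map_sum]
    have := h fun k : Fin N => φ (FreeAlgebra.ι F (k : ℕ))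
    rw [← this]
    refine Finset.sum_congr rfl fun σ _ => ?_
    rw [map_zsmul]
    congr 1
    rw [map_list_prod φ, List.map_ofFn]
    rfl


end PIQ

namespace PIQ

open Quiv List

variable {Q : Quiv}

theorem QPath.ext' {p q : Q.QPath} (h1 : p.src = q.src) (h2 : p.arrows = q.arrows)
    (h3 : p.tgt = q.tgt) : p = q := by
  cases p; cases q
  cases h1; cases h2; cases h3
  rfl

theorem rotate_closed {l : List Q.A} {u v : Q.V} (h : Q.IsPathFrom u l u)
    (hv : ∃ x ∈ l, Q.s x = v) :
    ∃ l', Q.IsPathFrom v l' v ∧ l' ≠ [] ∧ ∀ y, (y ∈ l' ↔ y ∈ l) := by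
  obtain ⟨x, hx, rfl⟩ := hv
  obtain ⟨pre, suf, rfl, hpre⟩ := reach_of_mem h hx
  obtain ⟨m, hm1, hm2⟩ := split_path h
  have hmx : m = Q.s x := tgt_unique hm1 hpre
  subst hmx
  refine ⟨(x :: suf) ++ pre, hm2.append hm1, by simp, fun y => ?_⟩
  simp only [List.mem_append, List.mem_cons]
  tauto

theorem bpow_isPath {v : Q.V} {b : List Q.A} (h : Q.IsPathFrom v b v) (k : ℕ) :
    Q.IsPathFrom v (bpow b k) v := by
  induction k with
  | zero => exact .nil v
  | succ n ih =>
    have : bpow b (n + 1) = b ++ bpow b n := by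
      simp [bpow, List.replicate_succ]
    rw [this]
    exact h.append ih

theorem wcode_isPath {v : Q.V} {a b : List Q.A} (hpa : Q.IsPathFrom v a v)
    (hpb : Q.IsPathFrom v b v) (u : List ℕ) : Q.IsPathFrom v (wcode a b u) v := by
  induction u with
  | nil => exact .nil v
  | cons i w ih => exact hpa.append ((bpow_isPath hpb (i + 1)).append ih)

theorem wcode_append (a b : List Q.A) (u u' : List ℕ) :
    wcode a b (u ++ u') = wcode a b u ++ wcode a b u' := by
  induction u with
  | nil => simp [wcode]
  | cons i w ih => simp [wcode, ih, List.append_assoc]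

theorem single_one_mul {F : Type} [Field F] (a : FreeMonoid ℕ)
    (f' : MonoidAlgebra F (FreeMonoid ℕ)) :
    MonoidAlgebra.single a 1 * f' = MonoidAlgebra.ofCoeff (Finsupp.mapDomain (fun w => a * w) f'.coeff) := by
  rw [MonoidAlgebra.mul_def, MonoidAlgebra.coeff_single, Finsupp.sum_single_index (by simp)]
  simp only [one_mul]
  apply MonoidAlgebra.coeff_injective
  rw [MonoidAlgebra.coeff_finsuppSum]
  rfl

/-- Evaluation of an algebra hom from the monoid algebra on sums of singles. -/
theorem algHom_monoidAlgebra_eq_sum {F : Type} [Field F] {A : Type} [Ring A] [Algebra F A]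
    (ψ : MonoidAlgebra F (FreeMonoid ℕ) →ₐ[F] A) (x : MonoidAlgebra F (FreeMonoid ℕ)) :
    ψ x = x.coeff.sum fun w c => c • ψ (MonoidAlgebra.single w 1) := by
  conv_lhs => rw [← MonoidAlgebra.sum_coeff_single x]
  rw [map_finsuppSum]
  refine Finsupp.sum_congr fun w _ => ?_
  have : (MonoidAlgebra.single w (x.coeff w) : MonoidAlgebra F (FreeMonoid ℕ))
      = (x.coeff w) • MonoidAlgebra.single w (1 : F) := by
    rw [MonoidAlgebra.smul_single, smul_eq_mul, mul_one]
  rw [this, map_smul]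

theorem notPI_aux {F : Type} [Field F] {A : Type} [Ring A] [Algebra F A]
    (P : PathAlgebra F Q A) {v : Q.V} {a b : List Q.A}
    (hpa : Q.IsPathFrom v a v) (hpb : Q.IsPathFrom v b v) (ha : a ≠ []) (hb : b ≠ [])
    {x : Q.A} (hxa : x ∈ a) (hxb : x ∉ b) : ¬ IsPI F A := by
  classical
  rintro ⟨f, hf0, hfid⟩
  -- the encoded paths
  set pw : List ℕ → Q.QPath := fun u => ⟨v, wcode a b u, v, wcode_isPath hpa hpb u⟩ with hpw
  have hbmul : ∀ u u', P.b (pw u) * P.b (pw u') = P.b (pw (u ++ u')) := by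
    intro u u'
    rw [P.mul_comp (pw u) (pw u') rfl]
    exact congrArg P.b (QPath.ext' rfl (wcode_append a b u u').symm rfl)
  set g : ℕ → A := fun i => P.b (pw [i]) with hg
  have hprod : ∀ u : List ℕ, u ≠ [] → (u.map g).prod = P.b (pw u) := by
    intro u
    induction u with
    | nil => intro h; exact absurd rfl h
    | cons i w ih =>
      intro _
      cases w with
      | nil => simp [hg]
      | cons j r =>
        rw [List.map_cons, List.prod_cons, ih (by simp), hg]
        exact hbmul [i] (j :: r)
  -- algebra homs
  set e := FreeAlgebra.equivMonoidAlgebraFreeMonoid (R := F) (X := ℕ) with he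
  set φ : FreeAlgebra F ℕ →ₐ[F] A := FreeAlgebra.lift F g with hφ
  set ψ : MonoidAlgebra F (FreeMonoid ℕ) →ₐ[F] A := φ.comp (e.symm : _ ≃ₐ[F] _).toAlgHom with hψ
  set f' := e f with hf'
  set f₂' := MonoidAlgebra.ofCoeff (Finsupp.mapDomain (fun w => FreeMonoid.of 0 * w) f'.coeff) with hf₂'
  have hf₂eq : (MonoidAlgebra.single (FreeMonoid.of 0) 1) * f' = f₂' := single_one_mul _ f'
  -- ψ of f₂' is zero since f is an identity
  have hzero : ψ f₂' = 0 := by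
    rw [← hf₂eq]
    have h1 : ψ ((MonoidAlgebra.single (FreeMonoid.of 0) 1) * f')
        = ψ (MonoidAlgebra.single (FreeMonoid.of 0) 1) * ψ f' := map_mul ψ _ _
    have h2 : ψ f' = φ f := by
      rw [hψ, AlgHom.comp_apply]
      congr 1
      exact e.symm_apply_apply f
    rw [h1, h2, hfid φ, mul_zero]
  -- ψ of f₂' as a linear combination of basis vectors
  set pmap : FreeMonoid ℕ → Q.QPath := fun w => pw (FreeMonoid.toList w) with hpmap
  have hsingle : ∀ w : FreeMonoid ℕ, FreeMonoid.toList w ≠ [] →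
      ψ (MonoidAlgebra.single w 1) = P.b (pmap w) := by
    intro w hw
    have hw1 : MonoidAlgebra.single w (1 : F)
        = ((FreeMonoid.toList w).map fun i =>
            (MonoidAlgebra.single (FreeMonoid.of i) (1 : F) :
              MonoidAlgebra F (FreeMonoid ℕ))).prod := by
      rw [single_list_prod, FreeMonoid.ofList_toList]
    rw [hw1, map_list_prod]
    have : ∀ i : ℕ, ψ (MonoidAlgebra.single (FreeMonoid.of i) 1) = g i := by
      intro i
      rw [hψ, AlgHom.comp_apply]
      have : (e.symm : _ ≃ₐ[F] _).toAlgHom (MonoidAlgebra.single (FreeMonoid.of i) (1 : F))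
          = FreeAlgebra.ι F i := by
        have := freeAlgebra_equiv_ι F i
        rw [← this]
        exact e.symm_apply_apply _
      rw [this, hφ, FreeAlgebra.lift_ι_apply]
    rw [List.map_map]
    have hmapg : ((FreeMonoid.toList w).map (⇑ψ ∘ fun i =>
        (MonoidAlgebra.single (FreeMonoid.of i) (1 : F) : MonoidAlgebra F (FreeMonoid ℕ))))
        = (FreeMonoid.toList w).map g := by
      refine List.map_congr_left fun i _ => ?_
      exact this i
    rw [hmapg, hprod _ hw]
  have hsupp : ∀ w ∈ f₂'.coeff.support, FreeMonoid.toList w ≠ [] := by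
    intro w hw
    have := Finsupp.mapDomain_support hw
    obtain ⟨w', _, rfl⟩ := Finset.mem_image.mp this
    show FreeMonoid.toList (FreeMonoid.of 0 * w') ≠ []
    simp [FreeMonoid.toList_of_mul]
  have hcomb : ψ f₂' = Finsupp.linearCombination F P.b (Finsupp.mapDomain pmap f₂'.coeff) := by
    rw [Finsupp.linearCombination_mapDomain, algHom_monoidAlgebra_eq_sum ψ f₂',
      Finsupp.linearCombination_apply]
    exact Finsupp.sum_congr fun w hw => by rw [hsingle w (hsupp w hw)]; rfl
  -- independence gives f₂' = 0, hence f = 0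
  have hL0 : Finsupp.mapDomain pmap f₂'.coeff = 0 :=
    linearIndependent_iff.mp P.indep _ (by rw [← hcomb, hzero])
  have hpw_inj : Function.Injective pw := by
    intro u u' h
    have : wcode a b u = wcode a b u' := congrArg Quiv.QPath.arrows h
    exact wcode_injective ha hb hxa hxb this
  have hpmap_inj : Function.Injective pmap :=
    fun w w' h => FreeMonoid.toList.injective (hpw_inj h)
  have hf₂0 : f₂' = 0 := MonoidAlgebra.coeff_injective
    (Finsupp.mapDomain_injective hpmap_inj (by rw [hL0]; simp))
  have hmul_inj : Function.Injective (fun w : FreeMonoid ℕ => FreeMonoid.of 0 * w) :=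
    fun w w' h => mul_left_cancel h
  have hf'0 : f' = 0 := MonoidAlgebra.coeff_injective (Finsupp.mapDomain_injective hmul_inj (by
    have := congrArg MonoidAlgebra.coeff hf₂0
    rw [hf₂'] at this
    simpa using this))
  exact hf0 (e.injective (by rw [← hf', hf'0, map_zero]))

end PIQ


namespace PIQ

open Quiv List

noncomputable section Embed

open Module

variable {Q : Quiv} [DecidableEq Q.V] [DecidableEq Q.A]
variable {F : Type} [Field F]

abbrev CC (Q : Quiv) (F : Type) [Field F] := MvPolynomial Q.A F
abbrev BB (Q : Quiv) (F : Type) [Field F] := Matrix Q.V Q.V (CC Q F)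

def μp (p : Q.QPath) : Q.A →₀ ℕ := Multiset.toFinsupp (p.arrows : Multiset Q.A)

def tgtm (F : Type) [Field F] (p : Q.QPath) : BB Q F :=
  Matrix.single p.src p.tgt (MvPolynomial.monomial (μp p) 1)

theorem μp_comp (p q : Q.QPath) (h : p.tgt = q.src) : μp (p.comp q h) = μp p + μp q := by
  unfold μp
  rw [← map_add]
  congr 1

theorem triple_inj (H : Hyp Q) :
    Function.Injective (fun p : Q.QPath => (μp p, (p.src, p.tgt))) := by
  intro p q h
  simp only [Prod.mk.injEq] at h
  obtain ⟨hμ, hsrc, htgt⟩ := h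
  have harr : p.arrows = q.arrows := by
    have hm : (p.arrows : Multiset Q.A) = (q.arrows : Multiset Q.A) :=
      Multiset.toFinsupp.injective hμ
    have hq := q.isPath
    rw [← hsrc] at hq
    exact walk_determined H p.arrows q.arrows p.isPath hq hm
  exact QPath.ext' hsrc harr htgt

def basisB (Q : Quiv) (F : Type) [Field F] [DecidableEq Q.V] :
    Basis ((Q.A →₀ ℕ) × (Q.V × Q.V)) F (BB Q F) :=
  (MvPolynomial.basisMonomials Q.A F).smulTower (Matrix.stdBasis (CC Q F) Q.V Q.V)

theorem basisB_apply (k : (Q.A →₀ ℕ) × (Q.V × Q.V)) :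
    basisB Q F k = Matrix.single k.2.1 k.2.2 (MvPolynomial.monomial k.1 1) := by
  obtain ⟨μ, u, w⟩ := k
  rw [basisB, Basis.smulTower_apply]
  simp only [MvPolynomial.coe_basisMonomials]
  rw [Matrix.stdBasis_eq_single, Matrix.smul_single, smul_eq_mul, mul_one]

theorem tgtm_indep (H : Hyp Q) : LinearIndependent F (tgtm (Q := Q) F) := by
  have : tgtm (Q := Q) F = (basisB Q F) ∘ (fun p : Q.QPath => (μp p, (p.src, p.tgt))) := by
    funext p
    rw [Function.comp_apply, basisB_apply]
    rfl
  rw [this]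
  exact (basisB Q F).linearIndependent.comp _ (triple_inj H)

variable {A : Type} [Ring A] [Algebra F A]

def basA (P : PathAlgebra F Q A) : Basis Q.QPath F A := Basis.mk P.indep P.spans.ge

def emb0 (P : PathAlgebra F Q A) : A →ₗ[F] BB Q F := (basA P).constr F (tgtm F)

theorem emb0_b (P : PathAlgebra F Q A) (p : Q.QPath) : emb0 P (P.b p) = tgtm F p := by
  have : P.b p = basA P p := (Basis.mk_apply _ _ p).symm
  rw [this, emb0, Basis.constr_basis]

theorem emb0_one (P : PathAlgebra F Q A) : emb0 P 1 = 1 := by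
  rw [← P.sum_lazy, map_sum]
  have h1 : ∀ v : Q.V, emb0 P (P.b (Quiv.QPath.lazy Q v))
      = Matrix.single v v (1 : CC Q F) := by
    intro v
    rw [emb0_b]
    unfold tgtm
    congr 1
  rw [Finset.sum_congr rfl fun v _ => h1 v]
  funext i j
  simp only [Matrix.sum_apply, Matrix.one_apply, Matrix.single, Matrix.of_apply]
  rcases eq_or_ne i j with rfl | hij
  · simp
  · rw [if_neg hij]
    apply Finset.sum_eq_zero
    intro v _
    rw [if_neg]
    rintro ⟨rfl, rfl⟩
    exact hij rfl

theorem emb0_mul_b (P : PathAlgebra F Q A) (p q : Q.QPath) :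
    emb0 P (P.b p * P.b q) = emb0 P (P.b p) * emb0 P (P.b q) := by
  by_cases h : p.tgt = q.src
  · rw [P.mul_comp p q h, emb0_b, emb0_b, emb0_b]
    unfold tgtm
    rw [h, Matrix.single_mul_single_same, MvPolynomial.monomial_mul, one_mul]
    show Matrix.single (p.comp q h).src (p.comp q h).tgt _ = _
    rw [μp_comp p q h]
    rfl
  · rw [P.mul_zero p q h, map_zero, emb0_b, emb0_b]
    unfold tgtm
    rw [Matrix.single_mul_single_of_ne (h := h)]

theorem emb0_mul (P : PathAlgebra F Q A) (x y : A) :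
    emb0 P (x * y) = emb0 P x * emb0 P y := by
  have key : (LinearMap.mul F A).compr₂ (emb0 P)
      = (LinearMap.mul F (BB Q F)).compl₁₂ (emb0 P) (emb0 P) := by
    refine Basis.ext (basA P) fun p => ?_
    refine Basis.ext (basA P) fun q => ?_
    have hp : basA P p = P.b p := Basis.mk_apply _ _ p
    have hq : basA P q = P.b q := Basis.mk_apply _ _ q
    rw [LinearMap.compr₂_apply, LinearMap.compl₁₂_apply, hp, hq, LinearMap.mul_apply']
    exact emb0_mul_b P p q
  have := LinearMap.congr_fun (LinearMap.congr_fun key x) y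
  rw [LinearMap.compr₂_apply, LinearMap.compl₁₂_apply, LinearMap.mul_apply'] at this
  exact this

def emb (P : PathAlgebra F Q A) : A →ₐ[F] BB Q F :=
  AlgHom.ofLinearMap (emb0 P) (emb0_one P) (emb0_mul P)

theorem emb_injective (P : PathAlgebra F Q A) (H : Hyp Q) :
    Function.Injective (emb P) := by
  have hli : Function.Injective (Finsupp.linearCombination F (tgtm (Q := Q) F)) :=
    (tgtm_indep H)
  intro x y hxy
  have hx : emb0 P x = emb0 P y := hxy
  rw [emb0, Basis.constr_apply, Basis.constr_apply] at hx
  have hx' : Finsupp.linearCombination F (tgtm (Q := Q) F) ((basA P).repr x)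
      = Finsupp.linearCombination F (tgtm (Q := Q) F) ((basA P).repr y) := by
    rw [Finsupp.linearCombination_apply, Finsupp.linearCombination_apply]
    exact hx
  exact (basA P).repr.injective (hli hx')

theorem isPI_of_hyp (P : PathAlgebra F Q A) (H : Hyp Q) : IsPI F A :=
  isPI_of_standard F A (Fintype.card Q.V * Fintype.card Q.V + 1)
    (satisfiesStd_of_injective (emb P).toRingHom (emb_injective P H)
      (matrix_satisfiesStd Q.V (CC Q F)))

end Embed

end PIQ


/-- A finite quiver is PI iff every vertex lies on at most one cycle,
i.e. any two cycles sharing a common vertex have the same set of arrows. -/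
theorem pathAlgebra_isPI_iff (F : Type) [Field F] (Q : Quiv)
    (A : Type) [Ring A] [Algebra F A] (P : PathAlgebra F Q A) :
    IsPI F A ↔
      ∀ c₁ c₂ : Q.QPath, c₁.IsCycle → c₂.IsCycle →
        (∃ v : Q.V, v ∈ c₁.arrows.map Q.s ∧ v ∈ c₂.arrows.map Q.s) →
        (∀ a : Q.A, a ∈ c₁.arrows ↔ a ∈ c₂.arrows) := by
  constructor
  · intro hPI
    by_contra hH
    simp only [not_forall] at hH
    obtain ⟨c₁, c₂, h1, h2, hshare, a0, hna⟩ := hH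
    obtain ⟨v, hv1, hv2⟩ := hshare
    have hc1 : Q.IsPathFrom c₁.src c₁.arrows c₁.src := h1.2.1 ▸ c₁.isPath
    have hc2 : Q.IsPathFrom c₂.src c₂.arrows c₂.src := h2.2.1 ▸ c₂.isPath
    obtain ⟨x1, hx1, hsx1⟩ := List.mem_map.mp hv1
    obtain ⟨x2, hx2, hsx2⟩ := List.mem_map.mp hv2
    obtain ⟨l₁, hp₁, hl₁ne, hmem₁⟩ := PIQ.rotate_closed hc1 ⟨x1, hx1, hsx1⟩
    obtain ⟨l₂, hp₂, hl₂ne, hmem₂⟩ := PIQ.rotate_closed hc2 ⟨x2, hx2, hsx2⟩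
    have hcases : (a0 ∈ c₁.arrows ∧ a0 ∉ c₂.arrows) ∨ (a0 ∉ c₁.arrows ∧ a0 ∈ c₂.arrows) := by
      by_cases hA : a0 ∈ c₁.arrows <;> by_cases hB : a0 ∈ c₂.arrows <;> tauto
    rcases hcases with ⟨hA, hB⟩ | ⟨hA, hB⟩
    · exact PIQ.notPI_aux P hp₁ hp₂ hl₁ne hl₂ne ((hmem₁ a0).mpr hA)
        (fun hc => hB ((hmem₂ a0).mp hc)) hPI
    · exact PIQ.notPI_aux P hp₂ hp₁ hl₂ne hl₁ne ((hmem₂ a0).mpr hB)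
        (fun hc => hA ((hmem₁ a0).mp hc)) hPI
  · intro hH
    haveI := Classical.decEq Q.V
    haveI := Classical.decEq Q.A
    exact PIQ.isPI_of_hyp P hH
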